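/- Let V be a finite-dimensional real inner product space, let J : V → V be a linear map satisfying J∘J = −id and ⟨Jx, Jy⟩ = ⟨x, y⟩ for all x, y ∈ V (an orthogonal complex structure), and let H : V → V be a self-adjoint linear map that anticommutes with J, i.e. H∘J = −J∘H. Then for every unit vector v ∈ V and every orthonormal basis (e₁, …, e_d) of V one has 2‖Hv‖² ≤ Σᵢ ‖Heᵢ‖², i.e. the squared Hilbert–Schmidt norm of H is at least 2‖Hv‖². -/
import Mathlib


open RealInnerProductSpace

private lemma bessel2 {V : Type*} [NormedAddCommGroup V] [InnerProductSpace ℝ V]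
    (v w x : V) (hv : ‖v‖ = 1) (hw : ‖w‖ = 1) (hvw : ⟪v, w⟫ = 0) :
    ⟪v, x⟫ ^ 2 + ⟪w, x⟫ ^ 2 ≤ ‖x‖ ^ 2 := by
  have hvv : ⟪v, v⟫ = 1 := by rw [real_inner_self_eq_norm_sq, hv]; norm_num
  have hww : ⟪w, w⟫ = 1 := by rw [real_inner_self_eq_norm_sq, hw]; norm_num
  have hwv : ⟪w, v⟫ = 0 := by rw [real_inner_comm]; exact hvw
  have key : (0:ℝ) ≤ ⟪x - ⟪v, x⟫ • v - ⟪w, x⟫ • w, x - ⟪v, x⟫ • v - ⟪w, x⟫ • w⟫ :=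
    real_inner_self_nonneg
  have hx : ‖x‖ ^ 2 = ⟪x, x⟫ := (real_inner_self_eq_norm_sq x).symm
  simp only [inner_sub_left, inner_sub_right, inner_smul_left, inner_smul_right,
    conj_trivial, hvv, hww, hvw, hwv, real_inner_comm x v,
    real_inner_comm x w] at key
  rw [hx]
  rw [real_inner_comm v x, real_inner_comm w x] at key
  nlinarith [key]

theorem hilbert_schmidt_bound_of_anticommuting_complex_structure
    {V : Type*} [NormedAddCommGroup V] [InnerProductSpace ℝ V]
    [FiniteDimensional ℝ V]
    (J H : V →ₗ[ℝ] V)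
    (hJ2 : J ∘ₗ J = -LinearMap.id)
    (hJO : ∀ x y : V, ⟪J x, J y⟫ = ⟪x, y⟫)
    (hHsym : ∀ x y : V, ⟪H x, y⟫ = ⟪x, H y⟫)
    (hHJ : H ∘ₗ J = -(J ∘ₗ H))
    (v : V) (hv : ‖v‖ = 1)
    {ι : Type*} [Fintype ι] (e : OrthonormalBasis ι ℝ V) :
    2 * ‖H v‖ ^ 2 ≤ ∑ i, ‖H (e i)‖ ^ 2 := by
  have hJnorm : ∀ x : V, ‖J x‖ = ‖x‖ := by
    intro x
    have := hJO x x
    rw [real_inner_self_eq_norm_sq, real_inner_self_eq_norm_sq] at this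
    nlinarith [norm_nonneg (J x), norm_nonneg x]
  have hJJ : ∀ x : V, J (J x) = -x := fun x => by
    have := congrArg (fun f => f x) hJ2; simpa using this
  -- v and Jv are orthonormal
  have hJv : ‖J v‖ = 1 := by rw [hJnorm, hv]
  have hvJv : ⟪v, J v⟫ = 0 := by
    have h1 : ⟪J v, J (J v)⟫ = ⟪v, J v⟫ := hJO v (J v)
    rw [hJJ, inner_neg_right, real_inner_comm] at h1
    linarith
  -- ‖H(Jv)‖ = ‖Hv‖
  have hHJv : ‖H (J v)‖ = ‖H v‖ := by
    have := congrArg (fun f => f v) hHJ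
    simp only [LinearMap.comp_apply, LinearMap.neg_apply] at this
    rw [this, norm_neg, hJnorm]
  -- expand norms via the basis
  have expand : ∀ x : V, ‖H x‖ ^ 2 = ∑ i, ⟪e i, H x⟫ ^ 2 := by
    intro x
    have := e.sum_inner_mul_inner (H x) (H x)
    rw [← real_inner_self_eq_norm_sq]
    rw [← this]
    congr 1; funext i; rw [real_inner_comm (H x) (e i)]; ring
  have flip : ∀ (i : ι) (x : V), ⟪e i, H x⟫ = ⟪H (e i), x⟫ := fun i x => (hHsym (e i) x).symm
  calc 2 * ‖H v‖ ^ 2 = ‖H v‖ ^ 2 + ‖H (J v)‖ ^ 2 := by rw [hHJv]; ring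
    _ = ∑ i, (⟪v, H (e i)⟫ ^ 2 + ⟪J v, H (e i)⟫ ^ 2) := by
        rw [expand, expand, ← Finset.sum_add_distrib]
        congr 1; funext i
        rw [flip, flip, real_inner_comm (H (e i)) v, real_inner_comm (H (e i)) (J v)]
    _ ≤ ∑ i, ‖H (e i)‖ ^ 2 := by
        apply Finset.sum_le_sum
        intro i _
        exact bessel2 v (J v) (H (e i)) hv hJv hvJv
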